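/- If X ∈ ℝ^{N×N} is symmetric positive semi-definite, then Φ(X) is positive semi-definite; that is, Φ preserves the cone of positive semi-definite matrices. -/

import Mathlib

open Matrix BigOperators

noncomputable def Phi {N : ℕ} (P : Matrix (Fin N) (Fin N) ℝ) (q : ℝ)
    (X : Matrix (Fin N) (Fin N) ℝ) : Matrix (Fin N) (Fin N) ℝ :=
  ((1 - q) • (1 : Matrix (Fin N) (Fin N) ℝ) + q • P) * X *
      ((1 - q) • (1 : Matrix (Fin N) (Fin N) ℝ) + q • P)ᵀ
    + q ^ 2 •
        (Matrix.diagonal (P *ᵥ Matrix.diag X)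
          - Matrix.diagonal (Matrix.diag (P * X * Pᵀ)))

theorem stmt3 (N : ℕ) (hN : 1 ≤ N) (P : Matrix (Fin N) (Fin N) ℝ)
    (hPnonneg : ∀ i j, 0 ≤ P i j) (hProw : ∀ i, ∑ j, P i j = 1)
    (q : ℝ) (hq0 : 0 ≤ q) (hq1 : q ≤ 1)
    (X : Matrix (Fin N) (Fin N) ℝ) (hX : X.PosSemidef) :
    (Phi P q X).PosSemidef := by
  have quad : ∀ j k, 0 ≤ X j j + X k k - X j k - X k j := by
    intro j k
    have h := hX.dotProduct_mulVec_nonneg (Pi.single j 1 - Pi.single k 1)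
    simp [dotProduct, mulVec, sub_mul, mul_sub, Pi.single_apply, Finset.sum_sub_distrib,
      Finset.mul_sum, Finset.sum_ite_eq, Finset.sum_ite_eq'] at h
    linarith
  have key : ∀ i, 0 ≤ (P *ᵥ X.diag) i - (P * X * Pᵀ).diag i := by
    intro i
    have hA : (P *ᵥ X.diag) i = ∑ j, ∑ k, P i j * P i k * X j j := by
      simp only [mulVec, dotProduct, Matrix.diag]
      refine Finset.sum_congr rfl fun j _ => ?_
      rw [← Finset.sum_mul, ← Finset.mul_sum, hProw i, mul_one]
    have hB : (P * X * Pᵀ).diag i = ∑ j, ∑ k, P i j * P i k * X j k := by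
      simp only [Matrix.diag, mul_apply, transpose_apply, Finset.sum_mul]
      rw [Finset.sum_comm]
      refine Finset.sum_congr rfl fun j _ => Finset.sum_congr rfl fun k _ => by ring
    have hA' : (P *ᵥ X.diag) i = ∑ j, ∑ k, P i j * P i k * X k k := by
      rw [hA, Finset.sum_comm]
      exact Finset.sum_congr rfl fun j _ => Finset.sum_congr rfl fun k _ => by ring
    have hB' : (P * X * Pᵀ).diag i = ∑ j, ∑ k, P i j * P i k * X k j := by
      rw [hB, Finset.sum_comm]
      exact Finset.sum_congr rfl fun j _ => Finset.sum_congr rfl fun k _ => by ring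
    have h2 : 0 ≤ 2 * ((P *ᵥ X.diag) i - (P * X * Pᵀ).diag i) := by
      have : 2 * ((P *ᵥ X.diag) i - (P * X * Pᵀ).diag i)
          = ∑ j, ∑ k, P i j * P i k * (X j j + X k k - X j k - X k j) := by
        rw [two_mul]
        nth_rewrite 1 [hA, hB]
        nth_rewrite 1 [hA', hB']
        simp only [← Finset.sum_sub_distrib, ← Finset.sum_add_distrib]
        exact Finset.sum_congr rfl fun j _ => Finset.sum_congr rfl fun k _ => by ring
      rw [this]
      refine Finset.sum_nonneg fun j _ => Finset.sum_nonneg fun k _ => ?_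
      exact mul_nonneg (mul_nonneg (hPnonneg i j) (hPnonneg i k)) (quad j k)
    linarith
  have h1 : (((1 - q) • (1 : Matrix (Fin N) (Fin N) ℝ) + q • P) * X *
      ((1 - q) • (1 : Matrix (Fin N) (Fin N) ℝ) + q • P)ᵀ).PosSemidef := by
    have := hX.mul_mul_conjTranspose_same ((1 - q) • (1 : Matrix (Fin N) (Fin N) ℝ) + q • P)
    simpa using this
  have h2 : (q ^ 2 • (Matrix.diagonal (P *ᵥ Matrix.diag X)
      - Matrix.diagonal (Matrix.diag (P * X * Pᵀ)))).PosSemidef := by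
    rw [diagonal_sub, ← diagonal_smul]
    exact posSemidef_diagonal_iff.mpr fun i => by
      simpa using mul_nonneg (sq_nonneg q) (key i)
  exact h1.add h2
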